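/- Let A be an n×n complex matrix given in ordered form with m distinct rows occurring with multiplicities p₁ ≤ ⋯ ≤ p_m (p₁+⋯+p_m = n), and let 𝒮(A) be the m×m matrix of block row sums: 𝒮_{jk}(A) = ∑_{ℓ = p₁+⋯+p_{k−1}+1}^{p₁+⋯+p_k} a_{p₁+⋯+p_j, ℓ}. Then A is universal if and only if all principal minors of 𝒮(A) vanish. -/

import Mathlib

open Matrix BigOperators

/-- Jacobian determinant of a map `f : ℂ^ι → ℂ^ι` at `x`. -/
noncomputable def jacDet {ι : Type*} [Fintype ι] [DecidableEq ι]
    (f : (ι → ℂ) → (ι → ℂ)) (x : ι → ℂ) : ℂ :=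
  (LinearMap.toMatrix (Pi.basisFun ℂ ι) (Pi.basisFun ℂ ι)
    (fderiv ℂ f x).toLinearMap).det

/-- The map `x ↦ x + φ(Ax)`, with `φ` applied entrywise. -/
noncomputable def phiMap {ι : Type*} [Fintype ι] (A : Matrix ι ι ℂ) (φ : ℂ → ℂ)
    (x : ι → ℂ) : ι → ℂ :=
  fun j => x j + φ (A.mulVec x j)

/-- Domain of definition of `x ↦ x + φ(Ax)` for `φ` defined on `Ω`. -/
def phiDom {ι : Type*} [Fintype ι] (A : Matrix ι ι ℂ) (Ω : Set ℂ) : Set (ι → ℂ) :=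
  {x | ∀ j, A.mulVec x j ∈ Ω}

/-- `(A, φ)` is a good pair: the Jacobian of `x + φ(Ax)` is identically a nonzero constant. -/
def IsGoodPair {ι : Type*} [Fintype ι] [DecidableEq ι]
    (A : Matrix ι ι ℂ) (Ω : Set ℂ) (φ : ℂ → ℂ) : Prop :=
  ∃ c : ℂ, c ≠ 0 ∧ ∀ x ∈ phiDom A Ω, jacDet (phiMap A φ) x = c

/-- A matrix is universal if it forms a good pair with every analytic function. -/
def IsUniversal {ι : Type*} [Fintype ι] [DecidableEq ι] (A : Matrix ι ι ℂ) : Prop :=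
  ∀ (Ω : Set ℂ) (φ : ℂ → ℂ), IsOpen Ω → Ω.Nonempty → IsPreconnected Ω →
    AnalyticOn ℂ φ Ω → (phiDom A Ω).Nonempty → IsGoodPair A Ω φ

/-- The principal minor of `A` indexed by `I`. -/
noncomputable def principalMinor {ι : Type*} [DecidableEq ι] (A : Matrix ι ι ℂ)
    (I : Finset ι) : ℂ :=
  (A.submatrix (fun i : I => (i : ι)) (fun i : I => (i : ι))).det



lemma principalMinor_empty {ι : Type*} [DecidableEq ι] (S : Matrix ι ι ℂ) :
    principalMinor S ∅ = 1 :=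
  Matrix.det_isEmpty

lemma det_piecewise_one {ι : Type*} [Fintype ι] [DecidableEq ι]
    (S : Matrix ι ι ℂ) (s : Finset ι) :
    Matrix.det (Matrix.of (s.piecewise (fun i => S i) (fun i => (1 : Matrix ι ι ℂ) i)))
      = principalMinor S s := by
  classical
  rw [← Matrix.det_submatrix_equiv_self (Equiv.sumCompl (· ∈ s))]
  have hsub : (Matrix.of (s.piecewise (fun i => S i) (fun i => (1 : Matrix ι ι ℂ) i))).submatrix
      (Equiv.sumCompl (· ∈ s)) (Equiv.sumCompl (· ∈ s)) =
      Matrix.fromBlocks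
        (S.submatrix (fun i : s => (i : ι)) (fun i : s => (i : ι)))
        (Matrix.of fun (i : s) (j : {a : ι // ¬ a ∈ s}) => S (i : ι) (j : ι))
        0 1 := by
    ext i j
    cases i with
    | inl i =>
      cases j with
      | inl j => simp [Finset.piecewise_eq_of_mem _ _ _ i.2]
      | inr j => simp [Finset.piecewise_eq_of_mem _ _ _ i.2]
    | inr i =>
      cases j with
      | inl j =>
        have hne : (i : ι) ≠ (j : ι) := fun h => i.2 (h ▸ j.2)
        simp [Finset.piecewise_eq_of_notMem _ _ _ i.2, Matrix.one_apply, hne]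
      | inr j =>
        simp [Finset.piecewise_eq_of_notMem _ _ _ i.2, Matrix.one_apply, Subtype.ext_iff]
  rw [hsub, Matrix.det_fromBlocks_zero₂₁, Matrix.det_one, mul_one, principalMinor]

lemma det_one_add_diagonal_mul {ι : Type*} [Fintype ι] [DecidableEq ι]
    (S : Matrix ι ι ℂ) (g : ι → ℂ) :
    Matrix.det (1 + Matrix.diagonal g * S)
      = ∑ I : Finset ι, (∏ k ∈ I, g k) * principalMinor S I := by
  classical
  set u : ι → ι → ℂ := fun i => g i • S i with hu
  set w : ι → ι → ℂ := fun i => (1 : Matrix ι ι ℂ) i with hw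
  have hM : (1 + Matrix.diagonal g * S : Matrix ι ι ℂ) = Matrix.of (u + w) := by
    ext i j
    simp [hu, hw, Matrix.diagonal_mul, Matrix.add_apply, add_comm, smul_eq_mul]
  rw [hM]
  have expand : Matrix.det (Matrix.of (u + w))
      = ∑ s : Finset ι, Matrix.detRowAlternating (s.piecewise u w) :=
    (Matrix.detRowAlternating (R := ℂ) (n := ι)).toMultilinearMap.map_add_univ u w
  rw [expand]
  refine Finset.sum_congr rfl fun s _ => ?_
  set m₀ : ι → ι → ℂ := s.piecewise (fun i => S i) w with hm
  have hpw : s.piecewise u w = s.piecewise (fun i => g i • m₀ i) m₀ := by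
    ext i j
    by_cases hi : i ∈ s
    · simp [Finset.piecewise_eq_of_mem _ _ _ hi, hm, hu]
    · simp [hm, Finset.piecewise_eq_of_notMem _ _ _ hi]
  rw [hpw]
  have := (Matrix.detRowAlternating (R := ℂ) (n := ι)).toMultilinearMap.map_piecewise_smul g m₀ s
  erw [this]
  have h2 : (Matrix.detRowAlternating (R := ℂ) (n := ι)).toMultilinearMap m₀
      = principalMinor S s := det_piecewise_one S s
  rw [h2, smul_eq_mul]


lemma jacDet_phiMap_eq {ι : Type*} [Fintype ι] [DecidableEq ι]
    (A : Matrix ι ι ℂ) (φ : ℂ → ℂ) (x : ι → ℂ)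
    (hφ : ∀ j, DifferentiableAt ℂ φ (A.mulVec x j)) :
    jacDet (phiMap A φ) x
      = Matrix.det (1 + Matrix.diagonal (fun j => deriv φ (A.mulVec x j)) * A) := by
  classical
  set d : ι → ℂ := fun j => deriv φ (A.mulVec x j) with hd
  set Acl : (ι → ℂ) →L[ℂ] (ι → ℂ) := LinearMap.toContinuousLinearMap A.mulVecLin with hAcl
  set L : (ι → ℂ) →L[ℂ] (ι → ℂ) := ContinuousLinearMap.pi
    (fun j => ContinuousLinearMap.proj j
      + d j • ((ContinuousLinearMap.proj j).comp Acl)) with hL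
  have hcomp : ∀ j : ι, HasFDerivAt (fun y : ι → ℂ => phiMap A φ y j)
      (ContinuousLinearMap.proj j + d j • ((ContinuousLinearMap.proj j).comp Acl)) x := by
    intro j
    have h1 : HasFDerivAt (fun y : ι → ℂ => y j)
        (ContinuousLinearMap.proj j : (ι → ℂ) →L[ℂ] ℂ) x :=
      hasFDerivAt_apply j x
    have hlin : HasFDerivAt (fun y : ι → ℂ => A.mulVec y j)
        ((ContinuousLinearMap.proj j).comp Acl) x := by
      have h := ((ContinuousLinearMap.proj (R := ℂ) (φ := fun _ : ι => ℂ) j).comp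
        Acl).hasFDerivAt (x := x)
      exact h
    have h2 : HasFDerivAt (fun y : ι → ℂ => φ (A.mulVec y j))
        (d j • ((ContinuousLinearMap.proj j).comp Acl)) x :=
      (hφ j).hasDerivAt.comp_hasFDerivAt x hlin
    exact h1.add h2
  have hder : HasFDerivAt (phiMap A φ) L x := by
    apply hasFDerivAt_pi''
    intro j
    rw [hL, ContinuousLinearMap.proj_pi]
    exact hcomp j
  have hfd : fderiv ℂ (phiMap A φ) x = L := hder.fderiv
  rw [jacDet, hfd]
  congr 1
  apply Matrix.ext; intro i j
  rw [LinearMap.toMatrix_apply]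
  simp only [Pi.basisFun_apply, Pi.basisFun_repr, ContinuousLinearMap.coe_coe, hL,
    ContinuousLinearMap.pi_apply, ContinuousLinearMap.add_apply, ContinuousLinearMap.smul_apply,
    ContinuousLinearMap.comp_apply, ContinuousLinearMap.proj_apply, hAcl,
    LinearMap.coe_toContinuousLinearMap', Matrix.mulVecLin_apply, Matrix.mulVec_single,
    Matrix.add_apply, Matrix.one_apply, Matrix.diagonal_mul, Pi.single_apply, smul_eq_mul,
    mul_one, MulOpposite.op_one, one_smul, Matrix.col_apply]


lemma det_diag_comp {n m : ℕ} (A : Matrix (Fin n) (Fin n) ℂ) (β : Fin n → Fin m)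
    (r : Fin m → Fin n)
    (hrows : ∀ i₁ i₂ : Fin n, A i₁ = A i₂ ↔ β i₁ = β i₂) (hr : ∀ j, β (r j) = j)
    (g : Fin m → ℂ) :
    Matrix.det (1 + Matrix.diagonal (fun j => g (β j)) * A)
      = Matrix.det (1 + Matrix.diagonal g *
          Matrix.of (fun j k : Fin m =>
            ∑ ℓ ∈ Finset.univ.filter (fun i => β i = k), A (r j) ℓ)) := by
  classical
  set P : Matrix (Fin n) (Fin m) ℂ := Matrix.of fun i k => if β i = k then 1 else 0 with hP
  set R : Matrix (Fin m) (Fin n) ℂ := Matrix.of fun k ℓ => A (r k) ℓ with hR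
  have hA : A = P * R := by
    ext i ℓ
    rw [Matrix.mul_apply]
    have hrow : A (r (β i)) = A i := (hrows (r (β i)) i).mpr (hr (β i))
    have : ∀ k : Fin m, (if β i = k then (1:ℂ) else 0) * A (r k) ℓ
        = if β i = k then A (r k) ℓ else 0 := by
      intro k; by_cases h : β i = k <;> simp [h]
    simp only [hP, hR, Matrix.of_apply, this, Finset.sum_ite_eq, Finset.mem_univ, if_true]
    rw [hrow]
  have hDP : Matrix.diagonal (fun j => g (β j)) * P = P * Matrix.diagonal g := by
    ext i k
    rw [Matrix.diagonal_mul, Matrix.mul_diagonal]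
    by_cases h : β i = k
    · simp [hP, h]
    · simp [hP, h]
  have hRP : R * P = Matrix.of (fun j k : Fin m =>
      ∑ ℓ ∈ Finset.univ.filter (fun i => β i = k), A (r j) ℓ) := by
    ext j k
    rw [Matrix.mul_apply, Matrix.of_apply, Finset.sum_filter]
    refine Finset.sum_congr rfl fun ℓ _ => ?_
    by_cases h : β ℓ = k <;> simp [hP, hR, h]
  calc Matrix.det (1 + Matrix.diagonal (fun j => g (β j)) * A)
      = Matrix.det (1 + P * (Matrix.diagonal g * R)) := by
        rw [hA, ← Matrix.mul_assoc, hDP, Matrix.mul_assoc]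
    _ = Matrix.det (1 + (Matrix.diagonal g * R) * P) := Matrix.det_one_add_mul_comm _ _
    _ = Matrix.det (1 + Matrix.diagonal g * (R * P)) := by rw [Matrix.mul_assoc]
    _ = _ := by rw [hRP]

lemma exists_dot_ne_zero {n : ℕ} (s : Finset (Fin n → ℂ)) (hs : ∀ w ∈ s, w ≠ 0) :
    ∃ x : Fin n → ℂ, ∀ w ∈ s, w ⬝ᵥ x ≠ 0 := by
  classical
  set q : (Fin n → ℂ) → Polynomial ℂ :=
    fun w => ∑ j : Fin n, Polynomial.C (w j) * Polynomial.X ^ ((j : ℕ) + 1) with hq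
  have hcoeff : ∀ (w : Fin n → ℂ) (j0 : Fin n), (q w).coeff ((j0 : ℕ) + 1) = w j0 := by
    intro w j0
    rw [hq]
    simp only [Polynomial.finset_sum_coeff]
    have : ∀ j : Fin n, (Polynomial.C (w j) * Polynomial.X ^ ((j:ℕ)+1)).coeff ((j0:ℕ)+1)
        = if j0 = j then w j else 0 := by
      intro j
      rw [Polynomial.coeff_C_mul_X_pow]
      by_cases h : j0 = j
      · simp [h]
      · have hne : ¬ ((j0:ℕ)+1 = (j:ℕ)+1) := by
          simpa [Fin.val_inj] using h
        simp [h, hne, Fin.val_inj]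
    rw [Finset.sum_congr rfl fun j _ => this j]
    simp
  have hq0 : ∀ w ∈ s, q w ≠ 0 := by
    intro w hw hzero
    obtain ⟨j0, hj0⟩ : ∃ j, w j ≠ 0 := by
      by_contra h; push_neg at h; exact hs w hw (funext h)
    apply hj0
    rw [← hcoeff w j0, hzero, Polynomial.coeff_zero]
  have hfin : (⋃ w ∈ s, {t : ℂ | (q w).IsRoot t}).Finite :=
    Set.Finite.biUnion s.finite_toSet fun w hw => Polynomial.finite_setOf_isRoot (hq0 w hw)
  obtain ⟨t, ht⟩ := hfin.infinite_compl.nonempty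
  refine ⟨fun j => t ^ ((j : ℕ) + 1), fun w hw h0 => ?_⟩
  apply ht
  refine Set.mem_biUnion hw ?_
  have hev : (q w).eval t = w ⬝ᵥ (fun j => t ^ ((j : ℕ) + 1)) := by
    rw [hq]
    rw [Polynomial.eval_finset_sum]
    simp [dotProduct]
  simp only [Set.mem_setOf_eq, Polynomial.IsRoot, hev, h0]

lemma exists_entire_deriv {m : ℕ} (v : Fin m → ℂ) (e : Fin m → ℂ)
    (hv : Function.Injective v) (h0 : ∀ k, v k = 0 → e k = 0) :
    ∃ φ : ℂ → ℂ, AnalyticOnNhd ℂ φ Set.univ ∧ deriv φ 0 = 0 ∧ ∀ k, deriv φ (v k) = e k := by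
  classical
  set ζ : ℂ → ℂ := fun z => if h : ∃ k, v k = z then e h.choose else 0 with hζ
  have hζv : ∀ k, ζ (v k) = e k := by
    intro k
    have h : ∃ k', v k' = v k := ⟨k, rfl⟩
    rw [hζ]
    simp only
    rw [dif_pos h]
    exact congrArg e (hv h.choose_spec)
  have hζ0 : ζ 0 = 0 := by
    rw [hζ]
    simp only
    split
    · next h => exact h0 _ h.choose_spec
    · rfl
  set nodes : Finset ℂ := insert 0 (Finset.image v Finset.univ) with hnodes
  set ψ : Polynomial ℂ := Lagrange.interpolate nodes id ζ with hψ
  have heval : ∀ z ∈ nodes, ψ.eval z = ζ z := by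
    intro z hz
    have h := Lagrange.eval_interpolate_at_node (v := id) (r := ζ)
      (Set.injOn_id _) hz
    simpa [hψ] using h
  set Ψ : Polynomial ℂ := ∑ k ∈ ψ.support, Polynomial.C (ψ.coeff k / (k + 1))
    * Polynomial.X ^ (k + 1) with hΨ
  have hder : Polynomial.derivative Ψ = ψ := by
    rw [hΨ, map_sum]
    have hterm : ∀ k ∈ ψ.support, Polynomial.derivative
        (Polynomial.C (ψ.coeff k / (k + 1)) * Polynomial.X ^ (k + 1))
        = Polynomial.C (ψ.coeff k) * Polynomial.X ^ k := by
      intro k _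
      have hk : ((k : ℂ) + 1) ≠ 0 := Nat.cast_add_one_ne_zero k
      rw [Polynomial.derivative_C_mul_X_pow, Nat.add_sub_cancel]
      push_cast
      rw [div_mul_cancel₀ _ hk]
    rw [Finset.sum_congr rfl hterm]
    conv_rhs => rw [← Polynomial.sum_C_mul_X_pow_eq ψ]
    rw [Polynomial.sum_def]
  refine ⟨fun z => Ψ.eval z, ?_, ?_, ?_⟩
  · intro z _
    have h := (analyticAt_id (𝕜 := ℂ) (E := ℂ) (z := z)).aeval_polynomial Ψ
    simpa [Polynomial.coe_aeval_eq_eval] using h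
  · rw [Polynomial.deriv, hder, heval 0 (Finset.mem_insert_self _ _), hζ0]
  · intro k
    rw [Polynomial.deriv, hder,
      heval (v k) (Finset.mem_insert_of_mem (Finset.mem_image_of_mem v (Finset.mem_univ k))),
      hζv]

theorem stmt9 (n m : ℕ) (A : Matrix (Fin n) (Fin n) ℂ) (p : Fin m → ℕ)
    (β : Fin n → Fin m) (r : Fin m → Fin n)
    (hβmono : Monotone β)
    (hpmono : Monotone p)
    (hppos : ∀ j, 0 < p j)
    (hcard : ∀ j, (Finset.univ.filter (fun i => β i = j)).card = p j)
    (hrows : ∀ i₁ i₂ : Fin n, A i₁ = A i₂ ↔ β i₁ = β i₂)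
    (hr : ∀ j, β (r j) = j) :
    IsUniversal A ↔ ∀ I : Finset (Fin m), I.Nonempty →
      principalMinor (Matrix.of fun j k : Fin m =>
        ∑ ℓ ∈ Finset.univ.filter (fun i => β i = k), A (r j) ℓ) I = 0 := by
  classical
  set 𝒮 : Matrix (Fin m) (Fin m) ℂ := Matrix.of fun j k : Fin m =>
      ∑ ℓ ∈ Finset.univ.filter (fun i => β i = k), A (r j) ℓ with h𝒮
  have master : ∀ (φ : ℂ → ℂ) (x : Fin n → ℂ), (∀ j, DifferentiableAt ℂ φ (A.mulVec x j)) →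
      jacDet (phiMap A φ) x
        = ∑ I : Finset (Fin m), (∏ k ∈ I, deriv φ (A.mulVec x (r k))) * principalMinor 𝒮 I := by
    intro φ x hdiff
    rw [jacDet_phiMap_eq A φ x hdiff]
    have hfun : (fun j => deriv φ (A.mulVec x j))
        = fun j => (fun k => deriv φ (A.mulVec x (r k))) (β j) := by
      funext j
      have hx : A.mulVec x j = A.mulVec x (r (β j)) := by
        show A j ⬝ᵥ x = A (r (β j)) ⬝ᵥ x
        rw [(hrows (r (β j)) j).mpr (hr (β j))]
      rw [hx]
    rw [hfun, det_diag_comp A β r hrows hr (fun k => deriv φ (A.mulVec x (r k))), ← h𝒮,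
      det_one_add_diagonal_mul]
  constructor
  · -- universal → minors vanish
    intro hU I₀ hI₀
    by_cases hW : ∃ k ∈ I₀, A (r k) = 0
    · obtain ⟨k₀, hk₀I, hk₀⟩ := hW
      unfold principalMinor
      apply Matrix.det_eq_zero_of_row_eq_zero (⟨k₀, hk₀I⟩ : {x // x ∈ I₀})
      intro j'
      rw [Matrix.submatrix_apply, h𝒮, Matrix.of_apply]
      apply Finset.sum_eq_zero
      intro ℓ _
      rw [hk₀]
      rfl
    · push_neg at hW
      have key : ∀ (q : ℕ) (J : Finset (Fin m)), J.card ≤ q → J.Nonempty →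
          (∀ k ∈ J, A (r k) ≠ 0) → principalMinor 𝒮 J = 0 := by
        intro q
        induction q with
        | zero =>
          intro J hJc hJne _
          have := Finset.card_pos.mpr hJne
          omega
        | succ q ih =>
          intro J hJc hJne hJnz
          obtain ⟨x₀, hx₀⟩ := exists_dot_ne_zero
            ((((Finset.univ : Finset (Fin m × Fin m)).filter (fun kk => kk.1 ≠ kk.2)).image
                (fun kk => A (r kk.1) - A (r kk.2))) ∪
              (((Finset.univ : Finset (Fin m)).filter (fun k => A (r k) ≠ 0)).image
                (fun k => A (r k))))
            (by
              intro w hw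
              rcases Finset.mem_union.mp hw with hw | hw
              · obtain ⟨kk, hkk, rfl⟩ := Finset.mem_image.mp hw
                have hne : kk.1 ≠ kk.2 := (Finset.mem_filter.mp hkk).2
                intro hzero
                apply hne
                have h1 : A (r kk.1) = A (r kk.2) := sub_eq_zero.mp hzero
                have h2 := (hrows _ _).mp h1
                rwa [hr, hr] at h2
              · obtain ⟨k, hk, rfl⟩ := Finset.mem_image.mp hw
                exact (Finset.mem_filter.mp hk).2)
          set v : Fin m → ℂ := fun k => A.mulVec x₀ (r k) with hv
          have hvdot : ∀ k, v k = A (r k) ⬝ᵥ x₀ := fun k => rfl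
          have hvne : ∀ k, A (r k) ≠ 0 → v k ≠ 0 := by
            intro k hk
            rw [hvdot]
            exact hx₀ _ (Finset.mem_union_right _ (Finset.mem_image_of_mem _
              (Finset.mem_filter.mpr ⟨Finset.mem_univ k, hk⟩)))
          have hvinj : Function.Injective v := by
            intro a b hab
            by_contra hne
            have hmem2 : (a, b) ∈ (Finset.univ : Finset (Fin m × Fin m)).filter
                (fun kk => kk.1 ≠ kk.2) :=
              Finset.mem_filter.mpr ⟨Finset.mem_univ _, hne⟩
            have hdz := hx₀ _ (Finset.mem_union_left _
              (Finset.mem_image_of_mem (fun kk : Fin m × Fin m => A (r kk.1) - A (r kk.2)) hmem2))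
            apply hdz
            rw [sub_dotProduct, ← hvdot, ← hvdot, hab, sub_self]
          set e : Fin m → ℂ := fun k => if k ∈ J then 1 else 0 with he
          have h0e : ∀ k, v k = 0 → e k = 0 := by
            intro k hk
            rw [he]
            simp only
            rw [if_neg]
            intro hkJ
            exact hvne k (hJnz k hkJ) hk
          obtain ⟨φ, hφan, hφ0, hφv⟩ := exists_entire_deriv v e hvinj h0e
          obtain ⟨c, hc0, hc⟩ := hU Set.univ φ isOpen_univ Set.univ_nonempty
            isPreconnected_univ hφan.analyticOn ⟨0, fun j => Set.mem_univ _⟩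
          have hdiff : ∀ (x : Fin n → ℂ) (j : Fin n), DifferentiableAt ℂ φ (A.mulVec x j) :=
            fun x j => (hφan _ (Set.mem_univ _)).differentiableAt
          have h0c : (1 : ℂ) = c := by
            rw [← hc 0 (fun j => Set.mem_univ _), master φ 0 (hdiff 0)]
            rw [Finset.sum_eq_single (∅ : Finset (Fin m))]
            · rw [principalMinor_empty, Finset.prod_empty, one_mul]
            · intro I _ hIne
              obtain ⟨k, hk⟩ := Finset.nonempty_iff_ne_empty.mpr hIne
              rw [Finset.prod_eq_zero hk, zero_mul]
              simp [Matrix.mulVec_zero, hφ0]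
            · intro h; exact absurd (Finset.mem_univ ∅) h
          have hsum : ∑ I : Finset (Fin m),
                (∏ k ∈ I, deriv φ (A.mulVec x₀ (r k))) * principalMinor 𝒮 I
              = ∑ I ∈ J.powerset, principalMinor 𝒮 I := by
            have hprod : ∀ I : Finset (Fin m),
                (∏ k ∈ I, deriv φ (A.mulVec x₀ (r k))) = if I ⊆ J then 1 else 0 := by
              intro I
              by_cases hIJ : I ⊆ J
              · rw [if_pos hIJ]
                apply Finset.prod_eq_one
                intro k hk
                rw [show A.mulVec x₀ (r k) = v k from rfl, hφv k, he]
                simp [hIJ hk]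
              · rw [if_neg hIJ]
                obtain ⟨k, hkI, hkJ⟩ := Finset.not_subset.mp hIJ
                apply Finset.prod_eq_zero hkI
                rw [show A.mulVec x₀ (r k) = v k from rfl, hφv k, he]
                simp [hkJ]
            have hfilter : (Finset.univ : Finset (Finset (Fin m))).filter (· ⊆ J)
                = J.powerset := by
              ext K; simp [Finset.mem_powerset]
            calc ∑ I : Finset (Fin m),
                  (∏ k ∈ I, deriv φ (A.mulVec x₀ (r k))) * principalMinor 𝒮 I
                = ∑ I : Finset (Fin m), (if I ⊆ J then principalMinor 𝒮 I else 0) := by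
                  refine Finset.sum_congr rfl fun I _ => ?_
                  rw [hprod I]
                  by_cases h : I ⊆ J <;> simp [h]
              _ = ∑ I ∈ (Finset.univ : Finset (Finset (Fin m))).filter (· ⊆ J),
                    principalMinor 𝒮 I := (Finset.sum_filter _ _).symm
              _ = ∑ I ∈ J.powerset, principalMinor 𝒮 I := by rw [hfilter]
          have hx₀c : ∑ I ∈ J.powerset, principalMinor 𝒮 I = c := by
            rw [← hsum, ← master φ x₀ (hdiff x₀)]
            exact hc x₀ (fun j => Set.mem_univ _)
          rw [← h0c] at hx₀c
          have hJmem : J ∈ J.powerset := Finset.mem_powerset_self J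
          rw [← Finset.add_sum_erase _ _ hJmem] at hx₀c
          have herase : ∑ I ∈ J.powerset.erase J, principalMinor 𝒮 I = 1 := by
            rw [Finset.sum_eq_single (∅ : Finset (Fin m))]
            · exact principalMinor_empty 𝒮
            · intro I hI hIne
              have hIJ : I ⊆ J := Finset.mem_powerset.mp (Finset.mem_of_mem_erase hI)
              have hIneJ : I ≠ J := Finset.ne_of_mem_erase hI
              have hlt : I.card < J.card := Finset.card_lt_card (hIJ.ssubset_of_ne hIneJ)
              exact ih I (by omega) (Finset.nonempty_iff_ne_empty.mpr hIne)
                (fun k hk => hJnz k (hIJ hk))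
            · intro h
              exact absurd (Finset.mem_erase.mpr
                ⟨Ne.symm (Finset.nonempty_iff_ne_empty.mp hJne),
                  Finset.empty_mem_powerset J⟩) h
          rw [herase] at hx₀c
          linear_combination hx₀c
      exact key I₀.card I₀ le_rfl hI₀ hW
  · -- minors vanish → universal
    intro hmin Ω φ hΩ _ _ hφ _
    refine ⟨1, one_ne_zero, ?_⟩
    intro x hx
    have hφ' : AnalyticOnNhd ℂ φ Ω := (hΩ.analyticOn_iff_analyticOnNhd).mp hφ
    rw [master φ x (fun j => (hφ' _ (hx j)).differentiableAt)]
    rw [Finset.sum_eq_single (∅ : Finset (Fin m))]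
    · rw [principalMinor_empty, Finset.prod_empty, one_mul]
    · intro I _ hIne
      rw [hmin I (Finset.nonempty_iff_ne_empty.mpr hIne), mul_zero]
    · intro h; exact absurd (Finset.mem_univ ∅) h
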